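/- Let R be a ring and s, t central elements of R. An element A = [[a, 0, 0], [c, d, e], [0, 0, f]] of the ring H_{(s,t)}(R) is nilpotent if and only if a, d, and f are nilpotent elements of R. -/
import Mathlib


/-- An element of a ring has a *CN-decomposition* if it is a sum of a central
element and a nilpotent element. -/
def HasCNDecomp {R : Type*} [Ring R] (a : R) : Prop :=
  ∃ c n : R, c ∈ Set.center R ∧ IsNilpotent n ∧ a = c + n

/-- A ring is a *CN ring* if every element has a CN-decomposition. -/
def IsCNRing (R : Type*) [Ring R] : Prop := ∀ a : R, HasCNDecomp a

/-- `H_{(s,t)}(R)`: the subring of `M₃(R)` of matrices of the form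
`[[a, 0, 0], [c, d, e], [0, 0, f]]` with `a - d = s*c` and `d - f = t*e`,
for central elements `s, t` of `R`. -/
def Hst {R : Type*} [Ring R] (s t : R) (hs : s ∈ Set.center R) (ht : t ∈ Set.center R) :
    Subring (Matrix (Fin 3) (Fin 3) R) where
  carrier := {A | A 0 1 = 0 ∧ A 0 2 = 0 ∧ A 2 0 = 0 ∧ A 2 1 = 0 ∧
    A 0 0 - A 1 1 = s * A 1 0 ∧ A 1 1 - A 2 2 = t * A 1 2}
  zero_mem' := ⟨rfl, rfl, rfl, rfl, by simp, by simp⟩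
  one_mem' := by
    refine ⟨?_, ?_, ?_, ?_, ?_, ?_⟩ <;> simp [Matrix.one_apply]
  add_mem' := by
    rintro A B ⟨hA1, hA2, hA3, hA4, hA5, hA6⟩ ⟨hB1, hB2, hB3, hB4, hB5, hB6⟩
    refine ⟨?_, ?_, ?_, ?_, ?_, ?_⟩ <;> simp only [Matrix.add_apply]
    · rw [hA1, hB1, add_zero]
    · rw [hA2, hB2, add_zero]
    · rw [hA3, hB3, add_zero]
    · rw [hA4, hB4, add_zero]
    · rw [mul_add, ← hA5, ← hB5]; abel
    · rw [mul_add, ← hA6, ← hB6]; abel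
  neg_mem' := by
    rintro A ⟨hA1, hA2, hA3, hA4, hA5, hA6⟩
    refine ⟨?_, ?_, ?_, ?_, ?_, ?_⟩ <;> simp only [Matrix.neg_apply]
    · rw [hA1, neg_zero]
    · rw [hA2, neg_zero]
    · rw [hA3, neg_zero]
    · rw [hA4, neg_zero]
    · rw [mul_neg, ← hA5]; abel
    · rw [mul_neg, ← hA6]; abel
  mul_mem' := by
    rintro A B ⟨hB1, hB2, hB3, hB4, hB5, hB6⟩ ⟨hC1, hC2, hC3, hC4, hC5, hC6⟩
    refine ⟨?_, ?_, ?_, ?_, ?_, ?_⟩ <;> rw [Matrix.mul_apply, Fin.sum_univ_three]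
    · rw [hB1, hC1, hB2, hC4, mul_zero, zero_mul, zero_mul]; simp
    · rw [hB1, hB2, hC2]; simp
    · rw [hB3, hB4, hC3]; simp
    · rw [hB3, hB4, hC4]; simp
    · rw [Matrix.mul_apply, Fin.sum_univ_three, hB1, hB2, hC1, hC4, hC3]
      have key : A 0 0 * B 0 0 - A 1 1 * B 1 1 =
          (A 0 0 - A 1 1) * B 0 0 + A 1 1 * (B 0 0 - B 1 1) := by noncomm_ring
      have h1 : A 1 1 * (s * B 1 0) = s * (A 1 1 * B 1 0) := by
        rw [← mul_assoc, ← hs.comm, mul_assoc]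
      simp only [zero_mul, mul_zero, add_zero, zero_add]
      rw [key, hB5, hC5, h1, mul_assoc, ← mul_add,
        Matrix.mul_apply, Fin.sum_univ_three, hC3, mul_zero, add_zero]
    · rw [Matrix.mul_apply, Fin.sum_univ_three, hC1, hC4, hB3, hB4, hC2]
      have key : A 1 1 * B 1 1 - A 2 2 * B 2 2 =
          A 1 1 * (B 1 1 - B 2 2) + (A 1 1 - A 2 2) * B 2 2 := by noncomm_ring
      have h1 : A 1 1 * (t * B 1 2) = t * (A 1 1 * B 1 2) := by
        rw [← mul_assoc, ← ht.comm, mul_assoc]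
      simp only [zero_mul, mul_zero, add_zero, zero_add]
      rw [key, hB6, hC6, h1, mul_assoc, ← mul_add,
        Matrix.mul_apply, Fin.sum_univ_three, hC2, mul_zero, zero_add]


open Finset in
lemma HstPowAux {R : Type*} [Ring R] (a c d e f : R) (k : ℕ) :
    (!![a,0,0;c,d,e;0,0,f] : Matrix (Fin 3) (Fin 3) R) ^ k =
      !![a^k, 0, 0;
         ∑ i ∈ range k, d^i * c * a^(k-1-i), d^k, ∑ i ∈ range k, d^i * e * f^(k-1-i);
         0, 0, f^k] := by
  induction k with
  | zero => simp [Matrix.one_fin_three]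
  | succ k ih =>
      have hc : ∀ i ∈ range k, d^i * c * a^(k-1-i) * a = d^i * c * a^(k-i) := by
        intro i hi
        rw [mul_assoc, ← pow_succ]
        congr 2
        have := Finset.mem_range.mp hi
        omega
      have he : ∀ i ∈ range k, d^i * e * f^(k-1-i) * f = d^i * e * f^(k-i) := by
        intro i hi
        rw [mul_assoc, ← pow_succ]
        congr 2
        have := Finset.mem_range.mp hi
        omega
      rw [pow_succ, ih, Matrix.mul_fin_three]
      simp only [mul_zero, zero_mul, add_zero, zero_add, ← pow_succ,
        Nat.add_sub_cancel, Finset.sum_range_succ, Finset.sum_mul,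
        Nat.sub_self, pow_zero, mul_one]
      rw [Finset.sum_congr rfl hc, Finset.sum_congr rfl he, add_comm (d ^ k * e)]

/-- An element `[[a,0,0],[c,d,e],[0,0,f]]` of `H_{(s,t)}(R)` (so with
`a - d = s*c` and `d - f = t*e`) is nilpotent iff `a`, `d` and `f` are
nilpotent in `R`. -/
theorem Hst_isNilpotent_iff {R : Type*} [Ring R] (s t : R)
    (hs : s ∈ Set.center R) (ht : t ∈ Set.center R) (a c d e f : R)
    (had : a - d = s * c) (hdf : d - f = t * e) :
    IsNilpotent (⟨!![a, 0, 0; c, d, e; 0, 0, f],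
        ⟨by simp, by simp, by simp, by simp, by simpa using had, by simpa using hdf⟩⟩ :
          Hst s t hs ht) ↔
      IsNilpotent a ∧ IsNilpotent d ∧ IsNilpotent f := by

  constructor
  · rintro ⟨n, hn⟩
    have hM : (!![a, 0, 0; c, d, e; 0, 0, f] : Matrix (Fin 3) (Fin 3) R) ^ n = 0 := by
      have := Subtype.ext_iff.mp hn
      simpa [SubmonoidClass.coe_pow] using this
    rw [HstPowAux] at hM
    refine ⟨⟨n, ?_⟩, ⟨n, ?_⟩, ⟨n, ?_⟩⟩
    · simpa using congrFun (congrFun hM 0) 0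
    · simpa using congrFun (congrFun hM 1) 1
    · simpa using congrFun (congrFun hM 2) 2
  · rintro ⟨⟨p, hp⟩, ⟨q, hq⟩, ⟨r, hr⟩⟩
    refine ⟨p + q + r, Subtype.ext ?_⟩
    rw [SubmonoidClass.coe_pow]
    show (!![a, 0, 0; c, d, e; 0, 0, f] : Matrix (Fin 3) (Fin 3) R) ^ (p + q + r) = 0
    rw [HstPowAux]
    have h1 : a ^ (p + q + r) = 0 := pow_eq_zero_of_le (by omega) hp
    have h2 : d ^ (p + q + r) = 0 := pow_eq_zero_of_le (by omega) hq
    have h3 : f ^ (p + q + r) = 0 := pow_eq_zero_of_le (by omega) hr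
    have h4 : ∑ i ∈ Finset.range (p + q + r), d ^ i * c * a ^ (p + q + r - 1 - i) = 0 := by
      refine Finset.sum_eq_zero fun i hi => ?_
      rcases le_or_gt q i with h | h
      · rw [pow_eq_zero_of_le h hq, zero_mul, zero_mul]
      · rw [pow_eq_zero_of_le (show p ≤ p + q + r - 1 - i by omega) hp, mul_zero]
    have h5 : ∑ i ∈ Finset.range (p + q + r), d ^ i * e * f ^ (p + q + r - 1 - i) = 0 := by
      refine Finset.sum_eq_zero fun i hi => ?_
      rcases le_or_gt q i with h | h
      · rw [pow_eq_zero_of_le h hq, zero_mul, zero_mul]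
      · rw [pow_eq_zero_of_le (show r ≤ p + q + r - 1 - i by omega) hr, mul_zero]
    rw [h1, h2, h3, h4, h5]
    ext i j
    fin_cases i <;> fin_cases j <;> rfl
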